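/- arXiv:1109.5273 — 2 statements merged into one kernel-verified Lean document; each statement's English description precedes it below -/
import Mathlib

section
/- Let σ be a positive Borel measure on ℝⁿ with ∫ (1+|u|²)^{-p} dσ(u) < ∞ for some p ∈ ℕ. Then the Schwartz space is dense in L²(ℝⁿ, σ). -/
open MeasureTheory SchwartzMap Metric Set Function
open scoped Convolution ENNReal Pointwise ContDiff

variable {E F : Type*} [NormedAddCommGroup E] [NormedSpace ℝ E]
  [NormedAddCommGroup F] [NormedSpace ℝ F]

/-- A smooth compactly supported function is a Schwartz function. -/
def HasCompactSupport.toSchwartzMap' {f : E → F} (h1 : ContDiff ℝ ∞ f)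
    (h2 : HasCompactSupport f) : SchwartzMap E F where
  toFun := f
  smooth' := h1
  decay' := by
    intro k m
    have hc : Continuous fun x : E => ‖x‖ ^ k * ‖_root_.iteratedFDeriv ℝ m f x‖ :=
      (continuous_norm.pow k).mul (h1.continuous_iteratedFDeriv (mod_cast le_top)).norm
    have hs : HasCompactSupport fun x : E => ‖x‖ ^ k * ‖_root_.iteratedFDeriv ℝ m f x‖ := by
      apply HasCompactSupport.mul_left
      exact (h2.iteratedFDeriv m).norm
    obtain ⟨C, hC⟩ := hc.bounded_above_of_compact_support hs
    exact ⟨C, fun x => le_trans (le_abs_self _) (hC x)⟩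

@[simp] lemma HasCompactSupport.toSchwartzMap'_apply {f : E → F} (h1 : ContDiff ℝ ∞ f)
    (h2 : HasCompactSupport f) (x : E) : HasCompactSupport.toSchwartzMap' h1 h2 x = f x := rfl

lemma finK {n : ℕ} (σ : Measure (EuclideanSpace ℝ (Fin n))) (p : ℕ)
    (hσ : ∫⁻ u, ENNReal.ofReal (1 / (1 + ‖u‖ ^ 2) ^ p) ∂σ < ⊤) :
    IsFiniteMeasureOnCompacts σ := by
  constructor
  intro K hK
  obtain ⟨R, hR0, hKR⟩ : ∃ R, 0 < R ∧ K ⊆ closedBall 0 R := by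
    obtain ⟨R, hKR⟩ := hK.isBounded.subset_closedBall 0
    exact ⟨max R 1, lt_of_lt_of_le one_pos (le_max_right _ _),
      hKR.trans (closedBall_subset_closedBall (le_max_left _ _))⟩
  set c : ℝ≥0∞ := ENNReal.ofReal (1 / (1 + R ^ 2) ^ p) with hc
  have hcpos : 0 < c := by
    apply ENNReal.ofReal_pos.2
    positivity
  have hbound : ∀ u ∈ K, c ≤ ENNReal.ofReal (1 / (1 + ‖u‖ ^ 2) ^ p) := by
    intro u hu
    apply ENNReal.ofReal_le_ofReal
    apply one_div_le_one_div_of_le (by positivity)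
    have h1 : ‖u‖ ≤ R := by simpa using hKR hu
    have : (1 + ‖u‖ ^ 2) ≤ 1 + R ^ 2 := by nlinarith [norm_nonneg u]
    exact pow_le_pow_left₀ (by positivity) this p
  have hKm : MeasurableSet K := hK.isClosed.measurableSet
  have key : c * σ K ≤ ∫⁻ u, ENNReal.ofReal (1 / (1 + ‖u‖ ^ 2) ^ p) ∂σ := by
    rw [← lintegral_indicator_const hKm c]
    apply lintegral_mono
    intro u
    by_cases hu : u ∈ K
    · simpa [indicator_of_mem hu] using hbound u hu
    · simp [indicator_of_notMem hu]
  by_contra h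
  push_neg at h
  rw [top_le_iff.1 h] at key
  rw [ENNReal.mul_top hcpos.ne'] at key
  exact hσ.ne (top_le_iff.1 key)

/-- The Schwartz space is dense in `L²(ℝⁿ, σ)` when `σ` has polynomial growth. -/
theorem stmt5 {n : ℕ} (σ : Measure (EuclideanSpace ℝ (Fin n))) (p : ℕ)
    (hσ : ∫⁻ u, ENNReal.ofReal (1 / (1 + ‖u‖ ^ 2) ^ p) ∂σ < ⊤)
    (f : EuclideanSpace ℝ (Fin n) → ℂ) (hf : MemLp f 2 σ)
    (ε : ℝ) (hε : 0 < ε) :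
    ∃ ψ : SchwartzMap (EuclideanSpace ℝ (Fin n)) ℂ,
      eLpNorm (fun x => f x - ψ x) 2 σ < ENNReal.ofReal ε := by
  haveI : IsFiniteMeasureOnCompacts σ := finK σ p hσ
  obtain ⟨g, hg_supp, hg_close, hg_cont, hg_mem⟩ :=
    hf.exists_hasCompactSupport_eLpNorm_sub_le (p := 2) (by norm_num)
      (ε := ENNReal.ofReal (ε / 4)) (by simp; positivity)
  set s : Set (EuclideanSpace ℝ (Fin n)) := Metric.closedBall (0 : EuclideanSpace ℝ (Fin n)) 1 + tsupport g with hs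
  have hs_cpt : IsCompact s := (isCompact_closedBall _ _).add hg_supp
  have hgs : tsupport g ⊆ s := fun y hy => by
    have h0 : (0 : EuclideanSpace ℝ (Fin n)) ∈
        Metric.closedBall (0 : EuclideanSpace ℝ (Fin n)) 1 :=
      Metric.mem_closedBall_self zero_le_one
    simpa using Set.add_mem_add h0 hy
  have hσs : σ s ≠ ⊤ := hs_cpt.measure_lt_top.ne
  set M : ℝ≥0∞ := σ s ^ ((1 : ℝ) / 2) with hM
  have hM_top : M ≠ ⊤ := ENNReal.rpow_ne_top_of_nonneg (by norm_num) hσs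
  have hMnn : 0 ≤ M.toReal := ENNReal.toReal_nonneg
  set δ : ℝ := (ε / 4) / (M.toReal + 1) with hδdef
  have hδ : 0 < δ := div_pos (by linarith) (by linarith)
  obtain ⟨r, hr0, hrδ⟩ := Metric.uniformContinuous_iff.1
    (hg_supp.uniformContinuous_of_continuous hg_cont) δ hδ
  set r' : ℝ := min r 1 with hr'def
  have hr'0 : 0 < r' := lt_min hr0 one_pos
  set φ : ContDiffBump (0 : EuclideanSpace ℝ (Fin n)) :=
    ⟨r' / 2, r', by positivity, by linarith⟩ with hφ
  set ψ0 : EuclideanSpace ℝ (Fin n) → ℂ :=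
    φ.normed volume ⋆[ContinuousLinearMap.lsmul ℝ ℝ, volume] g with hψ0
  have hψ_smooth : ContDiff ℝ ∞ ψ0 :=
    φ.hasCompactSupport_normed.contDiff_convolution_left _ φ.contDiff_normed
      hg_cont.locallyIntegrable
  have hψ_sub : tsupport ψ0 ⊆ s := by
    apply closure_minimal _ hs_cpt.isClosed
    refine (support_convolution_subset (ContinuousLinearMap.lsmul ℝ ℝ)
      (f := φ.normed volume) (g := g)).trans ?_
    refine Set.add_subset_add ?_ (subset_tsupport g)
    rw [φ.support_normed_eq]
    exact Metric.ball_subset_closedBall.trans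
      (Metric.closedBall_subset_closedBall (min_le_right r 1))
  have hψ_cpt : HasCompactSupport ψ0 := hs_cpt.of_isClosed_subset isClosed_closure hψ_sub
  have hdist : ∀ x, dist (ψ0 x) (g x) ≤ δ := by
    intro x
    apply φ.dist_normed_convolution_le hg_cont.aestronglyMeasurable
    intro y hy
    exact (hrδ (lt_of_lt_of_le (mem_ball.1 hy) (min_le_left r 1))).le
  have hptwise : ∀ x, ‖g x - ψ0 x‖ ≤ ‖s.indicator (fun _ => δ) x‖ := by
    intro x
    by_cases hx : x ∈ s
    · rw [indicator_of_mem hx, Real.norm_of_nonneg hδ.le, ← dist_eq_norm]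
      rw [dist_comm]
      exact hdist x
    · have h1 : g x = 0 := image_eq_zero_of_notMem_tsupport fun h => hx (hgs h)
      have h2 : ψ0 x = 0 := image_eq_zero_of_notMem_tsupport fun h => hx (hψ_sub h)
      simp [h1, h2, indicator_of_notMem hx]
  have hgψ : eLpNorm (fun x => g x - ψ0 x) 2 σ ≤ ENNReal.ofReal (ε / 4) := by
    calc eLpNorm (fun x => g x - ψ0 x) 2 σ
        ≤ eLpNorm (s.indicator fun _ => δ) 2 σ := eLpNorm_mono hptwise
      _ = ‖δ‖₊ * σ s ^ (1 / (2 : ℝ≥0∞).toReal) :=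
          eLpNorm_indicator_const hs_cpt.isClosed.measurableSet (by norm_num) (by norm_num)
      _ = ENNReal.ofReal δ * M := by
          have h2 : (1 / (2 : ℝ≥0∞).toReal) = ((1 : ℝ) / 2) := by norm_num
          rw [h2, hM, ← enorm_eq_nnnorm, Real.enorm_eq_ofReal hδ.le]
      _ ≤ ENNReal.ofReal (ε / 4) := by
          rw [← ENNReal.ofReal_toReal hM_top, ← ENNReal.ofReal_mul hδ.le]
          apply ENNReal.ofReal_le_ofReal
          rw [hδdef, div_mul_eq_mul_div, div_le_iff₀ (by linarith)]
          nlinarith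
  refine ⟨HasCompactSupport.toSchwartzMap' hψ_smooth hψ_cpt, ?_⟩
  have heq : (fun x => f x - (HasCompactSupport.toSchwartzMap' hψ_smooth hψ_cpt) x)
      = (fun x => f x - g x) + fun x => g x - ψ0 x := by
    funext x
    simp only [HasCompactSupport.toSchwartzMap'_apply, Pi.add_apply]
    ring
  rw [heq]
  calc eLpNorm ((fun x => f x - g x) + fun x => g x - ψ0 x) 2 σ
      ≤ eLpNorm (fun x => f x - g x) 2 σ + eLpNorm (fun x => g x - ψ0 x) 2 σ :=
        eLpNorm_add_le (hf.1.sub hg_mem.1)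
          (hg_mem.1.sub hψ_smooth.continuous.aestronglyMeasurable) one_le_two
    _ ≤ ENNReal.ofReal (ε / 4) + ENNReal.ofReal (ε / 4) := add_le_add hg_close hgψ
    _ = ENNReal.ofReal (ε / 2) := by
        rw [← ENNReal.ofReal_add (by linarith) (by linarith)]
        congr 1
        ring
    _ < ENNReal.ofReal ε := (ENNReal.ofReal_lt_ofReal_iff hε).2 (by linarith)
end

section
/- Let H be a Hilbert space, X : ℝⁿ → H with ‖X(t) − X(s)‖² = F(t−s) for a function F, and let (U(t)) be the associated unitary representation of (ℝⁿ, +) with U(t)X(s) = X(t+s), where the X(s) span H. Then U is strongly continuous if and only if F is continuous at 0 (equivalently, continuous on ℝⁿ). -/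
open MeasureTheory Filter

/-- Lemma 8.2: the unitary shift group is strongly continuous iff the structure
function `F` of the stationary mean-square increments is continuous at `0`. -/
theorem stmt8 {n : ℕ} {H : Type*} [NormedAddCommGroup H] [InnerProductSpace ℝ H]
    [CompleteSpace H]
    (X : EuclideanSpace ℝ (Fin n) → H) (F : EuclideanSpace ℝ (Fin n) → ℝ)
    (hF : ∀ t s, ‖X t - X s‖ ^ 2 = F (t - s))
    (U : EuclideanSpace ℝ (Fin n) → (H ≃ₗᵢ[ℝ] H))
    (hgroup : ∀ t₁ t₂ v, U (t₁ + t₂) v = U t₁ (U t₂ v))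
    (hcov : ∀ t s, U t (X s) = X (t + s))
    (hspan : (Submodule.span ℝ (Set.range X)).topologicalClosure = ⊤) :
    (∀ v : H, Continuous fun t => U t v) ↔ ContinuousAt F 0 := by
  have hFval : ∀ t, F t = ‖X t - X 0‖ ^ 2 := fun t => by
    have h := hF t 0
    rw [sub_zero] at h
    exact h.symm
  have hF0 : F 0 = 0 := by rw [hFval]; simp
  constructor
  · intro hU
    have hX : Continuous X := by
      have : (fun t => U t (X 0)) = X := funext fun t => by rw [hcov, add_zero]
      rw [← this]; exact hU (X 0)
    have : ContinuousAt (fun t => ‖X t - X 0‖ ^ 2) 0 := by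
      exact ((hX.sub continuous_const).norm.pow 2).continuousAt
    exact this.congr (Eventually.of_forall fun t => (hFval t).symm)
  · intro hFc
    have hU0 : ∀ v : H, U 0 v = v := by
      intro v
      have h00 := hgroup 0 0 v
      rw [add_zero] at h00
      exact (U 0).injective h00.symm
    have hFtendsto : Tendsto F (nhds 0) (nhds 0) := by
      simpa [hF0] using hFc.tendsto
    -- tendsto at 0 for each X s
    have key : ∀ s, Tendsto (fun t => U t (X s)) (nhds 0) (nhds (X s)) := by
      intro s
      rw [tendsto_iff_norm_sub_tendsto_zero]
      have heq : ∀ t, ‖U t (X s) - X s‖ = Real.sqrt (F t) := by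
        intro t
        rw [hcov]
        have := hF (t + s) s
        rw [add_sub_cancel_right] at this
        rw [← this, Real.sqrt_sq (norm_nonneg _)]
      have : Tendsto (fun t => Real.sqrt (F t)) (nhds 0) (nhds 0) := by
        have := (Real.continuous_sqrt.tendsto 0).comp hFtendsto
        simpa [Function.comp_def] using this
      exact this.congr fun t => (heq t).symm
    -- the set of good vectors is a closed submodule
    let S : Submodule ℝ H :=
      { carrier := {v : H | Tendsto (fun t => U t v) (nhds 0) (nhds v)}
        add_mem' := fun {a b} ha hb => by
          simpa [map_add] using ha.add hb
        zero_mem' := by simpa [map_zero] using (tendsto_const_nhds :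
          Tendsto (fun _ : EuclideanSpace ℝ (Fin n) => (0 : H)) (nhds 0) (nhds 0))
        smul_mem' := fun c a ha => by
          simpa [_root_.map_smul] using ha.const_smul c }
    have hclosed : IsClosed (S : Set H) := by
      rw [isClosed_iff_nhds]
      intro v hv
      show Tendsto (fun t => U t v) (nhds 0) (nhds v)
      rw [Metric.tendsto_nhds]
      intro ε hε
      obtain ⟨w, hwS, hwv⟩ : ∃ w ∈ (S : Set H), dist v w < ε / 3 := by
        have := hv (Metric.ball v (ε / 3)) (Metric.ball_mem_nhds v (by linarith))
        obtain ⟨w, hw1, hw2⟩ := this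
        exact ⟨w, hw2, by simpa [dist_comm] using hw1⟩
      have hw := Metric.tendsto_nhds.mp hwS (ε / 3) (by linarith)
      filter_upwards [hw] with t ht
      have h1 : dist (U t v) (U t w) = dist v w := (U t).isometry.dist_eq v w
      calc dist (U t v) v ≤ dist (U t v) (U t w) + dist (U t w) w + dist w v :=
            dist_triangle4 _ _ _ _
        _ < ε / 3 + ε / 3 + ε / 3 := by
            rw [h1, dist_comm w v]; linarith
        _ = ε := by ring
    have hle : Submodule.span ℝ (Set.range X) ≤ S := by
      rw [Submodule.span_le]
      rintro _ ⟨s, rfl⟩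
      exact key s
    have hStop : S = ⊤ := by
      refine top_unique ?_
      rw [← hspan]
      exact Submodule.topologicalClosure_minimal _ hle hclosed
    have hall : ∀ v : H, Tendsto (fun t => U t v) (nhds 0) (nhds v) := fun v => by
      have : v ∈ S := hStop.symm ▸ Submodule.mem_top
      exact this
    intro v
    rw [continuous_iff_continuousAt]
    intro t₀
    have hcomp : ContinuousAt (fun t => U (t - t₀) (U t₀ v)) t₀ := by
      have h1 : ContinuousAt (fun t : EuclideanSpace ℝ (Fin n) => t - t₀) t₀ :=
        (continuous_id.sub continuous_const).continuousAt
      have h2 : Tendsto (fun s => U s (U t₀ v)) (nhds 0) (nhds (U (t₀ - t₀) (U t₀ v))) := by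
        rw [sub_self, hU0]
        exact hall (U t₀ v)
      have h1' : Tendsto (fun t : EuclideanSpace ℝ (Fin n) => t - t₀) (nhds t₀) (nhds 0) := by
        simpa using h1.tendsto
      exact h2.comp h1'
    have heq : (fun t => U t v) = fun t => U (t - t₀) (U t₀ v) := by
      funext t
      rw [← hgroup, sub_add_cancel]
    rw [heq]
    exact hcomp
end
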